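/- With A_{n,k} as defined (n - 2k ≥ 2, k ≥ 1), the socle of A_{n,k} equals the one-dimensional span of S_{2k+1}^{n-2k}, and moreover m^{n-2k} = ⟨S_{2k+1}^{n-2k}⟩ where m is the maximal ideal; hence A_{n,k} is a Gorenstein local algebra of dimension n+1 whose socle equals m^{n-2k}. -/

import Mathlib

set_option synthInstance.maxHeartbeats 1000000
set_option maxHeartbeats 1000000

open MvPolynomial

namespace Stmt10Aux

variable (K : Type*) [Field K] (n k : ℕ)
def gS : Set (MvPolynomial (Fin (2 * k + 1)) K) :=
  {p | ∃ i j : Fin (2 * k + 1), i ≤ j ∧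
      ¬((∃ l, l < k ∧ (i : ℕ) = 2 * l ∧ (j : ℕ) = 2 * l + 1) ∨
        ((i : ℕ) = 2 * k ∧ (j : ℕ) = 2 * k)) ∧
      p = X i * X j} ∪
  {p | ∃ l, ∃ _ : l < k,
      p = X (⟨2 * l, by omega⟩ : Fin (2 * k + 1)) *
            X (⟨2 * l + 1, by omega⟩ : Fin (2 * k + 1)) -
          X (⟨2 * k, Nat.lt_succ_self _⟩ : Fin (2 * k + 1)) ^ (n - 2 * k)}

noncomputable def I0 : Ideal (MvPolynomial (Fin (2 * k + 1)) K) := Ideal.span (gS K n k)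

abbrev ι := Option (Fin (2 * k) ⊕ Fin (n - 2 * k))

noncomputable def μ : ι n k → (Fin (2 * k + 1) →₀ ℕ)
  | none => 0
  | some (.inl i) => Finsupp.single (Fin.castLE (Nat.le_succ _) i) 1
  | some (.inr j) => Finsupp.single ⟨2 * k, Nat.lt_succ_self _⟩ (j.1 + 1)

noncomputable def mix (l : Fin k) : Fin (2 * k + 1) →₀ ℕ :=
  Finsupp.single ⟨2 * l.1, by have := l.2; omega⟩ 1 +
    Finsupp.single ⟨2 * l.1 + 1, by have := l.2; omega⟩ 1

def D (u : Fin (2 * k + 1) →₀ ℕ) : ℕ := ∑ i, u i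

variable {k} in
lemma D_add (u v : Fin (2 * k + 1) →₀ ℕ) : D k (u + v) = D k u + D k v := by
  simp [D, Finsupp.add_apply, Finset.sum_add_distrib]

variable {k} in
lemma D_single (a : Fin (2 * k + 1)) (e : ℕ) : D k (Finsupp.single a e) = e := by
  simp [D, Finsupp.single_apply]

variable {k} in
lemma D_eq_zero {u : Fin (2 * k + 1) →₀ ℕ} : D k u = 0 ↔ u = 0 := by
  constructor
  · intro h
    ext a
    have := Finset.sum_eq_zero_iff.1 h a (Finset.mem_univ a)
    simpa using this
  · rintro rfl; simp [D]

variable {k} in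
lemma D_mix (l : Fin k) : D k (mix k l) = 2 := by
  simp [mix, D_add, D_single]

noncomputable def ℓ : ι n k → (MvPolynomial (Fin (2 * k + 1)) K →ₗ[K] K)
  | some (.inr j) => lcoeff K (μ n k (some (.inr j))) +
      (if j.1 = n - 2 * k - 1 then ∑ l : Fin k, lcoeff K (mix k l) else 0)
  | t => lcoeff K (μ n k t)

variable {K n k}

lemma ℓ_van1 (u : Fin (2 * k + 1) →₀ ℕ) (c : K) (i j : Fin (2 * k + 1))
    (hij : i ≤ j)
    (hcond : ¬((∃ l, l < k ∧ (i : ℕ) = 2 * l ∧ (j : ℕ) = 2 * l + 1) ∨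
        ((i : ℕ) = 2 * k ∧ (j : ℕ) = 2 * k))) (t : ι n k) :
    ℓ K n k t (monomial u c * (X i * X j)) = 0 := by
  push_neg at hcond
  obtain ⟨hc1, hc2⟩ := hcond
  have hmon : monomial u c * (X i * X j) =
      monomial (u + Finsupp.single i 1 + Finsupp.single j 1) c := by
    simp [X, add_assoc]
  rw [hmon]
  have hμ : ∀ t : ι n k, (u + Finsupp.single i 1 + Finsupp.single j 1) ≠ μ n k t := by
    rintro (_ | il | jr) h
    · have := DFunLike.congr_fun h i
      simp [μ, Finsupp.add_apply, Finsupp.single_apply] at this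
    · have h1 := DFunLike.congr_fun h i
      have h2 := DFunLike.congr_fun h j
      simp only [μ, Finsupp.add_apply, Finsupp.single_apply, Fin.ext_iff,
        Finsupp.coe_zero, Pi.zero_apply, Fin.coe_castLE] at h1 h2
      have hij' : (i : ℕ) ≤ j := hij
      split_ifs at h1 h2 <;> omega
    · have h1 := DFunLike.congr_fun h i
      have h2 := DFunLike.congr_fun h j
      simp only [μ, Finsupp.add_apply, Finsupp.single_apply, Fin.ext_iff] at h1 h2
      have := hc2
      split_ifs at h1 h2 <;> omega
  have hmix : ∀ l : Fin k, (u + Finsupp.single i 1 + Finsupp.single j 1) ≠ mix k l := by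
    intro l h
    have h1 := DFunLike.congr_fun h i
    have h2 := DFunLike.congr_fun h j
    have hl := l.2
    have hcl := hc1 l.1 hl
    have hij' : (i : ℕ) ≤ j := hij
    simp only [mix, Finsupp.add_apply, Finsupp.single_apply, Fin.ext_iff] at h1 h2
    split_ifs at h1 h2 <;> omega
  rcases t with _ | il | jr
  · simp [ℓ, lcoeff_apply, coeff_monomial, hμ none]
  · simp [ℓ, lcoeff_apply, coeff_monomial, hμ (some (.inl il))]
  · simp only [ℓ, LinearMap.add_apply, lcoeff_apply, coeff_monomial,
      if_neg (hμ (some (.inr jr)))]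
    split_ifs with htop
    · simp only [LinearMap.sum_apply, lcoeff_apply, coeff_monomial]
      rw [Finset.sum_eq_zero]
      · simp
      · intro l _
        rw [if_neg (hmix l)]
    · simp




lemma mix_inj {l1 l2 : Fin k} (h : mix k l1 = mix k l2) : l1 = l2 := by
  have h1 := DFunLike.congr_fun h (⟨2 * l1.1, by have := l1.2; omega⟩ : Fin (2 * k + 1))
  have e1 := l1.2
  have e2 := l2.2
  simp only [mix, Finsupp.add_apply, Finsupp.single_apply, Fin.ext_iff] at h1
  apply Fin.ext
  split_ifs at h1 <;> omega

lemma hA' (u : Fin (2 * k + 1) →₀ ℕ) (l : ℕ) (hl : l < k) (t : ι n k) :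
    u + (Finsupp.single (⟨2 * l, by omega⟩ : Fin (2 * k + 1)) 1 +
      Finsupp.single (⟨2 * l + 1, by omega⟩ : Fin (2 * k + 1)) 1) ≠ μ n k t := by
  rcases t with _ | il | jr <;> intro h
  · have h1 := DFunLike.congr_fun h (⟨2 * l, by omega⟩ : Fin (2 * k + 1))
    simp only [μ, Finsupp.add_apply, Finsupp.single_apply, Fin.ext_iff,
      Finsupp.coe_zero, Pi.zero_apply] at h1
    split_ifs at h1 <;> omega
  · have h1 := DFunLike.congr_fun h (⟨2 * l, by omega⟩ : Fin (2 * k + 1))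
    have h2 := DFunLike.congr_fun h (⟨2 * l + 1, by omega⟩ : Fin (2 * k + 1))
    have := il.2
    simp only [μ, Finsupp.add_apply, Finsupp.single_apply, Fin.ext_iff,
      Fin.coe_castLE] at h1 h2
    split_ifs at h1 h2 <;> omega
  · have h1 := DFunLike.congr_fun h (⟨2 * l, by omega⟩ : Fin (2 * k + 1))
    simp only [μ, Finsupp.add_apply, Finsupp.single_apply, Fin.ext_iff] at h1
    split_ifs at h1 <;> omega

lemma hA'mix (u : Fin (2 * k + 1) →₀ ℕ) (hu : u ≠ 0) (l : ℕ) (hl : l < k) (l' : Fin k) :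
    u + (Finsupp.single (⟨2 * l, by omega⟩ : Fin (2 * k + 1)) 1 +
      Finsupp.single (⟨2 * l + 1, by omega⟩ : Fin (2 * k + 1)) 1) ≠ mix k l' := by
  intro h
  have hD := congrArg (D k) h
  rw [D_add, D_add, D_single, D_single, D_mix] at hD
  have : ¬ D k u = 0 := fun h0 => hu (D_eq_zero.1 h0)
  omega

lemma hC' (hd : 2 ≤ n - 2 * k) (u : Fin (2 * k + 1) →₀ ℕ) (t : ι n k)
    (hnot : ∀ jr : Fin (n - 2 * k), t = some (.inr jr) → u ≠ 0 ∨ ¬ jr.1 + 1 = n - 2 * k) :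
    u + Finsupp.single (⟨2 * k, Nat.lt_succ_self _⟩ : Fin (2 * k + 1)) (n - 2 * k) ≠ μ n k t := by
  rcases t with _ | il | jr <;> intro h
  · have h1 := DFunLike.congr_fun h (⟨2 * k, Nat.lt_succ_self _⟩ : Fin (2 * k + 1))
    simp only [μ, Finsupp.add_apply, Finsupp.single_apply, Fin.ext_iff,
      Finsupp.coe_zero, Pi.zero_apply] at h1
    split_ifs at h1 <;> omega
  · have h1 := DFunLike.congr_fun h (⟨2 * k, Nat.lt_succ_self _⟩ : Fin (2 * k + 1))
    have := il.2
    simp only [μ, Finsupp.add_apply, Finsupp.single_apply, Fin.ext_iff,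
      Fin.coe_castLE] at h1
    split_ifs at h1 <;> omega
  · have hD := congrArg (D k) h
    simp only [μ] at hD
    rw [D_add, D_single, D_single] at hD
    have hj2 := jr.2
    rcases hnot jr rfl with hu | hjr
    · have : ¬ D k u = 0 := fun h0 => hu (D_eq_zero.1 h0)
      omega
    · have hDu : D k u = 0 ∨ ¬ D k u = 0 := em _
      rcases hDu with h0 | h0
      · omega
      · omega

lemma hC2' (hd : 2 ≤ n - 2 * k) (u : Fin (2 * k + 1) →₀ ℕ) (l' : Fin k) :
    u + Finsupp.single (⟨2 * k, Nat.lt_succ_self _⟩ : Fin (2 * k + 1)) (n - 2 * k) ≠ mix k l' := by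
  intro h
  have h1 := DFunLike.congr_fun h (⟨2 * k, Nat.lt_succ_self _⟩ : Fin (2 * k + 1))
  have := l'.2
  simp only [mix, Finsupp.add_apply, Finsupp.single_apply, Fin.ext_iff] at h1
  split_ifs at h1 <;> omega

lemma ℓ_van2 (hd : 2 ≤ n - 2 * k) (u : Fin (2 * k + 1) →₀ ℕ) (c : K) (l : ℕ) (hl : l < k)
    (t : ι n k) :
    ℓ K n k t (monomial u c *
      (X (⟨2 * l, Nat.lt_succ_of_lt (by omega)⟩ : Fin (2 * k + 1)) *
        X (⟨2 * l + 1, Nat.succ_lt_succ (by omega)⟩ : Fin (2 * k + 1)) -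
        X (⟨2 * k, Nat.lt_succ_self _⟩ : Fin (2 * k + 1)) ^ (n - 2 * k))) = 0 := by
  have hmon : monomial u c *
      (X (⟨2 * l, by omega⟩ : Fin (2 * k + 1)) * X (⟨2 * l + 1, by omega⟩ : Fin (2 * k + 1)) -
        X (⟨2 * k, Nat.lt_succ_self _⟩ : Fin (2 * k + 1)) ^ (n - 2 * k)) =
      monomial (u + (Finsupp.single (⟨2 * l, by omega⟩ : Fin (2 * k + 1)) 1 +
          Finsupp.single (⟨2 * l + 1, by omega⟩ : Fin (2 * k + 1)) 1)) c -
        monomial (u + Finsupp.single (⟨2 * k, Nat.lt_succ_self _⟩ : Fin (2 * k + 1)) (n - 2 * k)) c := by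
    rw [mul_sub]
    congr 1
    · simp [X, add_assoc]
    · rw [X_pow_eq_monomial, monomial_mul, mul_one]
  rw [hmon, map_sub]
  rcases t with _ | il | jr
  · simp only [ℓ, lcoeff_apply, map_sub, coeff_monomial]
    rw [if_neg (hA' u l hl none), if_neg (hC' hd u none (fun j hj => nomatch hj))]
    norm_num
  · simp only [ℓ, lcoeff_apply, map_sub, coeff_monomial]
    rw [if_neg (hA' u l hl (some (.inl il))),
      if_neg (hC' hd u (some (.inl il)) (fun j hj => nomatch hj))]
    norm_num
  · simp only [ℓ, LinearMap.add_apply, lcoeff_apply, map_sub, coeff_monomial]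
    rw [if_neg (hA' u l hl (some (.inr jr)))]
    by_cases htop : jr.1 = n - 2 * k - 1
    · rw [if_pos htop]
      by_cases hu : u = 0
      · subst hu
        have hw2eq : (0 : Fin (2 * k + 1) →₀ ℕ) +
            Finsupp.single (⟨2 * k, Nat.lt_succ_self _⟩ : Fin (2 * k + 1)) (n - 2 * k) =
            μ n k (some (.inr jr)) := by
          simp only [μ, zero_add]
          congr 1
          omega
        rw [if_pos hw2eq]
        simp only [LinearMap.sum_apply, lcoeff_apply, map_sub, coeff_monomial]
        have hmixeq : (0 : Fin (2 * k + 1) →₀ ℕ) +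
            (Finsupp.single (⟨2 * l, by omega⟩ : Fin (2 * k + 1)) 1 +
              Finsupp.single (⟨2 * l + 1, by omega⟩ : Fin (2 * k + 1)) 1) =
            mix k ⟨l, hl⟩ := by
          rw [zero_add]; rfl
        have hiff : ∀ l' : Fin k,
            ((0 : Fin (2 * k + 1) →₀ ℕ) +
              (Finsupp.single (⟨2 * l, by omega⟩ : Fin (2 * k + 1)) 1 +
                Finsupp.single (⟨2 * l + 1, by omega⟩ : Fin (2 * k + 1)) 1) = mix k l') ↔
            (l' = ⟨l, hl⟩) := by
          intro l'
          rw [hmixeq]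
          exact ⟨fun h => (mix_inj h).symm, fun h => by rw [h]⟩
        have hzero : ∀ l' : Fin k,
            (if (0 : Fin (2 * k + 1) →₀ ℕ) +
              Finsupp.single (⟨2 * k, Nat.lt_succ_self _⟩ : Fin (2 * k + 1)) (n - 2 * k) = mix k l'
              then c else 0) = 0 := fun l' => if_neg (hC2' hd 0 l')
        simp only [hiff, hzero, sub_zero]
        rw [Finset.sum_ite_eq' Finset.univ (⟨l, hl⟩ : Fin k) (fun _ => c)]
        simp
      · rw [if_neg (hC' hd u (some (.inr jr)) (fun j hj => Or.inl hu))]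
        simp only [LinearMap.sum_apply, lcoeff_apply, map_sub, coeff_monomial]
        have hz1 : ∀ l' : Fin k,
            (if u + (Finsupp.single (⟨2 * l, by omega⟩ : Fin (2 * k + 1)) 1 +
                Finsupp.single (⟨2 * l + 1, by omega⟩ : Fin (2 * k + 1)) 1) = mix k l'
              then c else 0) = 0 := fun l' => if_neg (hA'mix u hu l hl l')
        have hz2 : ∀ l' : Fin k,
            (if u + Finsupp.single (⟨2 * k, Nat.lt_succ_self _⟩ : Fin (2 * k + 1)) (n - 2 * k) = mix k l'
              then c else 0) = 0 := fun l' => if_neg (hC2' hd u l')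
        simp only [hz1, hz2, sub_zero]
        norm_num
    · rw [if_neg htop, if_neg (hC' hd u (some (.inr jr)) (by
        rintro j hj
        cases hj
        right
        omega))]
      norm_num

lemma ℓ_vanish (hd : 2 ≤ n - 2 * k) {p : MvPolynomial (Fin (2 * k + 1)) K}
    (hp : p ∈ I0 K n k) (t : ι n k) : ℓ K n k t p = 0 := by
  have main : ∀ q ∈ I0 K n k, ∀ r, ℓ K n k t (r * q) = 0 := by
    intro q hq
    refine Submodule.span_induction ?_ ?_ ?_ ?_ hq
    · rintro g (⟨i, j, hij, hcond, rfl⟩ | ⟨l, hl, rfl⟩)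
      · intro r
        induction r using MvPolynomial.induction_on' with
        | monomial u a => exact ℓ_van1 u a i j hij hcond t
        | add p q hp hq => rw [add_mul, map_add, hp, hq, add_zero]
      · intro r
        induction r using MvPolynomial.induction_on' with
        | monomial u a => exact ℓ_van2 hd u a l hl t
        | add p q hp hq => rw [add_mul, map_add, hp, hq, add_zero]
    · intro r; rw [mul_zero, map_zero]
    · intro a b _ _ ha hb r; rw [mul_add, map_add, ha, hb, add_zero]
    · intro a x _ hx r
      rw [smul_eq_mul, ← mul_assoc]
      exact hx (r * a)
  simpa using main p hp 1

lemma μ_inj : Function.Injective (μ n k) := by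
  rintro (_ | i1 | j1) (_ | i2 | j2) h
  · rfl
  · have h1 := DFunLike.congr_fun h (Fin.castLE (Nat.le_succ _) i2)
    simp [μ, Finsupp.single_apply] at h1
  · have h1 := DFunLike.congr_fun h (⟨2 * k, Nat.lt_succ_self _⟩ : Fin (2 * k + 1))
    simp [μ, Finsupp.single_apply] at h1
  · have h1 := DFunLike.congr_fun h (Fin.castLE (Nat.le_succ _) i1)
    simp [μ, Finsupp.single_apply] at h1
  · have h1 := DFunLike.congr_fun h (Fin.castLE (Nat.le_succ _) i1)
    have := i1.2
    have := i2.2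
    simp only [μ, Finsupp.single_apply, Fin.ext_iff, Fin.coe_castLE] at h1
    simp only [Option.some.injEq, Sum.inl.injEq, Fin.ext_iff]
    split_ifs at h1 <;> omega
  · have h1 := DFunLike.congr_fun h (⟨2 * k, Nat.lt_succ_self _⟩ : Fin (2 * k + 1))
    have := i1.2
    simp only [μ, Finsupp.single_apply, Fin.ext_iff, Fin.coe_castLE] at h1
    split_ifs at h1 <;> omega
  · have h1 := DFunLike.congr_fun h (⟨2 * k, Nat.lt_succ_self _⟩ : Fin (2 * k + 1))
    simp [μ, Finsupp.single_apply] at h1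
  · have h1 := DFunLike.congr_fun h (⟨2 * k, Nat.lt_succ_self _⟩ : Fin (2 * k + 1))
    have := i2.2
    simp only [μ, Finsupp.single_apply, Fin.ext_iff, Fin.coe_castLE] at h1
    split_ifs at h1 <;> omega
  · have h1 := DFunLike.congr_fun h (⟨2 * k, Nat.lt_succ_self _⟩ : Fin (2 * k + 1))
    simp only [μ, Finsupp.single_apply, Fin.ext_iff] at h1
    simp only [Option.some.injEq, Sum.inr.injEq, Fin.ext_iff]
    split_ifs at h1 <;> omega

lemma μ_ne_mix (t : ι n k) (l : Fin k) : μ n k t ≠ mix k l := by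
  have hl := l.2
  rcases t with _ | i | j <;> intro h
  · have h1 := DFunLike.congr_fun h (⟨2 * l.1, by omega⟩ : Fin (2 * k + 1))
    simp only [μ, mix, Finsupp.coe_zero, Pi.zero_apply, Finsupp.add_apply,
      Finsupp.single_apply, Fin.ext_iff] at h1
    split_ifs at h1 <;> omega
  · have h1 := DFunLike.congr_fun h (⟨2 * l.1, by omega⟩ : Fin (2 * k + 1))
    have h2 := DFunLike.congr_fun h (⟨2 * l.1 + 1, by omega⟩ : Fin (2 * k + 1))
    have := i.2
    simp only [μ, mix, Finsupp.add_apply, Finsupp.single_apply, Fin.ext_iff,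
      Fin.coe_castLE] at h1 h2
    split_ifs at h1 h2 <;> omega
  · have h1 := DFunLike.congr_fun h (⟨2 * l.1, by omega⟩ : Fin (2 * k + 1))
    simp only [μ, mix, Finsupp.add_apply, Finsupp.single_apply, Fin.ext_iff] at h1
    split_ifs at h1 <;> omega

lemma ℓ_basis (t t' : ι n k) :
    ℓ K n k t (monomial (μ n k t') (1 : K)) = if t' = t then 1 else 0 := by
  have hμ : (if μ n k t' = μ n k t then (1 : K) else 0) = if t' = t then 1 else 0 := by
    by_cases h : t' = t
    · rw [if_pos h, if_pos (by rw [h])]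
    · rw [if_neg h, if_neg (fun he => h (μ_inj he))]
  rcases t with _ | i | j
  · simp only [ℓ, lcoeff_apply, coeff_monomial]; exact hμ
  · simp only [ℓ, lcoeff_apply, coeff_monomial]; exact hμ
  · simp only [ℓ, LinearMap.add_apply, lcoeff_apply, coeff_monomial]
    rw [hμ]
    split_ifs with h1 h2 h2
    · simp only [LinearMap.sum_apply, lcoeff_apply, coeff_monomial]
      rw [Finset.sum_eq_zero (fun l _ => if_neg (μ_ne_mix t' l)), add_zero]
    · rw [LinearMap.zero_apply, add_zero]
    · simp only [LinearMap.sum_apply, lcoeff_apply, coeff_monomial]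
      rw [Finset.sum_eq_zero (fun l _ => if_neg (μ_ne_mix t' l)), add_zero]
    · rw [LinearMap.zero_apply, add_zero]

variable (K n k) in
noncomputable def xq (i : Fin (2 * k + 1)) : MvPolynomial (Fin (2 * k + 1)) K ⧸ I0 K n k :=
  Ideal.Quotient.mk (I0 K n k) (X i)

variable (K n k) in
noncomputable def v : ι n k → (MvPolynomial (Fin (2 * k + 1)) K ⧸ I0 K n k)
  | none => 1
  | some (.inl i) => xq K n k (Fin.castLE (Nat.le_succ _) i)
  | some (.inr j) => xq K n k ⟨2 * k, Nat.lt_succ_self _⟩ ^ (j.1 + 1)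

lemma v_eq_mk (t : ι n k) :
    v K n k t = Ideal.Quotient.mk (I0 K n k) (monomial (μ n k t) 1) := by
  rcases t with _ | i | j
  · rw [v, μ]
    rw [monomial_zero', C_1, map_one]
  · rw [v, μ, xq]
    rfl
  · rw [v, μ, xq, ← map_pow, X_pow_eq_monomial]

lemma v_indep (hd : 2 ≤ n - 2 * k) : LinearIndependent K (v K n k) := by
  rw [Fintype.linearIndependent_iff]
  intro c hc t
  have hmk : Ideal.Quotient.mkₐ K (I0 K n k)
      (∑ t', c t' • monomial (μ n k t') (1 : K)) = 0 := by
    rw [map_sum]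
    rw [← hc]
    refine Finset.sum_congr rfl (fun t' _ => ?_)
    rw [map_smul, Ideal.Quotient.mkₐ_eq_mk, ← v_eq_mk]
  have hmem : (∑ t', c t' • monomial (μ n k t') (1 : K)) ∈ I0 K n k := by
    rw [← Ideal.Quotient.eq_zero_iff_mem, ← Ideal.Quotient.mkₐ_eq_mk K]
    exact hmk
  have h0 := ℓ_vanish hd hmem t
  rw [map_sum] at h0
  simp only [map_smul, ℓ_basis, smul_eq_mul, mul_ite, mul_one, mul_zero] at h0
  rwa [Finset.sum_ite_eq' Finset.univ t c, if_pos (Finset.mem_univ t)] at h0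


lemma xq_mul_rel0 (i j : Fin (2 * k + 1)) (hij : i ≤ j)
    (hcond : ¬((∃ l, l < k ∧ (i : ℕ) = 2 * l ∧ (j : ℕ) = 2 * l + 1) ∨
        ((i : ℕ) = 2 * k ∧ (j : ℕ) = 2 * k))) :
    xq K n k i * xq K n k j = 0 := by
  rw [xq, xq, ← map_mul, Ideal.Quotient.eq_zero_iff_mem]
  exact Ideal.subset_span (Or.inl ⟨i, j, hij, hcond, rfl⟩)

lemma xq_mul_rel1 (l : ℕ) (hl : l < k) :
    xq K n k ⟨2 * l, by omega⟩ * xq K n k ⟨2 * l + 1, by omega⟩ =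
      xq K n k ⟨2 * k, Nat.lt_succ_self _⟩ ^ (n - 2 * k) := by
  rw [xq, xq, xq, ← map_mul, ← map_pow, ← sub_eq_zero, ← map_sub,
    Ideal.Quotient.eq_zero_iff_mem]
  exact Ideal.subset_span (Or.inr ⟨l, hl, rfl⟩)

lemma xq_mul_s (i : Fin (2 * k + 1)) (hi : (i : ℕ) ≠ 2 * k) :
    xq K n k i * xq K n k ⟨2 * k, Nat.lt_succ_self _⟩ = 0 := by
  refine xq_mul_rel0 i ⟨2 * k, Nat.lt_succ_self _⟩
    (by rw [Fin.le_def]; exact (show (i : ℕ) ≤ 2 * k by have := i.2; omega)) ?_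
  rintro (⟨l, hl, h1, h2⟩ | ⟨h1, h2⟩)
  · have h2' : (2 * k : ℕ) = 2 * l + 1 := h2
    omega
  · exact hi h1

lemma s_mul_xq (i : Fin (2 * k + 1)) (hi : (i : ℕ) ≠ 2 * k) :
    xq K n k ⟨2 * k, Nat.lt_succ_self _⟩ * xq K n k i = 0 := by
  rw [mul_comm (xq K n k ⟨2 * k, Nat.lt_succ_self _⟩) (xq K n k i)]
  exact xq_mul_s i hi

lemma xq_mul_spow (i : Fin (2 * k + 1)) (hi : (i : ℕ) ≠ 2 * k) (e : ℕ) :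
    xq K n k i * xq K n k ⟨2 * k, Nat.lt_succ_self _⟩ ^ (e + 1) = 0 := by
  rw [pow_succ', ← mul_assoc, xq_mul_s i hi, zero_mul]

lemma spow_mul_xq (i : Fin (2 * k + 1)) (hi : (i : ℕ) ≠ 2 * k) (e : ℕ) :
    xq K n k ⟨2 * k, Nat.lt_succ_self _⟩ ^ (e + 1) * xq K n k i = 0 := by
  rw [mul_comm (xq K n k ⟨2 * k, Nat.lt_succ_self _⟩ ^ (e + 1)) (xq K n k i)]
  exact xq_mul_spow i hi e

lemma s_pow_succ (hk : 1 ≤ k) (hd : 2 ≤ n - 2 * k) :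
    xq K n k ⟨2 * k, Nat.lt_succ_self _⟩ ^ (n - 2 * k + 1) = 0 := by
  have h01 := xq_mul_rel1 (K := K) (n := n) 0 hk
  rw [pow_succ, ← h01, mul_assoc,
    xq_mul_s ⟨2 * 0 + 1, by omega⟩ (show (2 * 0 + 1 : ℕ) ≠ 2 * k by omega), mul_zero]

lemma s_pow_ge (hk : 1 ≤ k) (hd : 2 ≤ n - 2 * k) (e : ℕ) (he : n - 2 * k + 1 ≤ e) :
    xq K n k ⟨2 * k, Nat.lt_succ_self _⟩ ^ e = 0 := by
  have : e = (n - 2 * k + 1) + (e - (n - 2 * k + 1)) := by omega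
  rw [this, pow_add, s_pow_succ hk hd, zero_mul]

lemma prod_cases_le (hk : 1 ≤ k) (i j : Fin (2 * k + 1)) (hij : i ≤ j) :
    xq K n k i * xq K n k j = 0 ∨
      xq K n k i * xq K n k j = xq K n k ⟨2 * k, Nat.lt_succ_self _⟩ ^ 2 ∨
      xq K n k i * xq K n k j = xq K n k ⟨2 * k, Nat.lt_succ_self _⟩ ^ (n - 2 * k) := by
  by_cases hc : (∃ l, l < k ∧ (i : ℕ) = 2 * l ∧ (j : ℕ) = 2 * l + 1) ∨
      ((i : ℕ) = 2 * k ∧ (j : ℕ) = 2 * k)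
  · rcases hc with ⟨l, hl, h1, h2⟩ | ⟨h1, h2⟩
    · right; right
      rcases i with ⟨iv, hiv⟩
      rcases j with ⟨jv, hjv⟩
      have h1' : iv = 2 * l := h1
      have h2' : jv = 2 * l + 1 := h2
      subst h1'
      subst h2'
      exact xq_mul_rel1 l hl
    · right; left
      rcases i with ⟨iv, hiv⟩
      rcases j with ⟨jv, hjv⟩
      have h1' : iv = 2 * k := h1
      have h2' : jv = 2 * k := h2
      subst h1'
      subst h2'
      exact (sq (xq K n k ⟨2 * k, hiv⟩)).symm
  · left; exact xq_mul_rel0 i j hij hc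

lemma prod_cases (hk : 1 ≤ k) (i j : Fin (2 * k + 1)) :
    xq K n k i * xq K n k j = 0 ∨
      xq K n k i * xq K n k j = xq K n k ⟨2 * k, Nat.lt_succ_self _⟩ ^ 2 ∨
      xq K n k i * xq K n k j = xq K n k ⟨2 * k, Nat.lt_succ_self _⟩ ^ (n - 2 * k) := by
  rcases le_total i j with h | h
  · exact prod_cases_le hk i j h
  · rw [mul_comm (xq K n k i) (xq K n k j)]
    exact prod_cases_le hk j i h

lemma v_none : v K n k none = 1 := rfl

lemma v_inl (i : Fin (2 * k)) :
    v K n k (some (.inl i)) = xq K n k (Fin.castLE (Nat.le_succ _) i) := rfl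

lemma v_inr (j : Fin (n - 2 * k)) :
    v K n k (some (.inr j)) = xq K n k ⟨2 * k, Nat.lt_succ_self _⟩ ^ (j.1 + 1) := rfl

lemma s_mem_span (hk : 1 ≤ k) (hd : 2 ≤ n - 2 * k) (e : ℕ) (he : 1 ≤ e) :
    xq K n k ⟨2 * k, Nat.lt_succ_self _⟩ ^ e ∈ Submodule.span K (Set.range (v K n k)) := by
  by_cases hle : e ≤ n - 2 * k
  · have : xq K n k ⟨2 * k, Nat.lt_succ_self _⟩ ^ e = v K n k (some (.inr ⟨e - 1, by omega⟩)) := by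
      rw [v_inr]
      congr 1
      show e = e - 1 + 1
      omega
    rw [this]
    exact Submodule.subset_span (Set.mem_range_self _)
  · rw [s_pow_ge hk hd e (by omega)]
    exact Submodule.zero_mem _

lemma xq_mem_span (hk : 1 ≤ k) (hd : 2 ≤ n - 2 * k) (i : Fin (2 * k + 1)) :
    xq K n k i ∈ Submodule.span K (Set.range (v K n k)) := by
  by_cases h : (i : ℕ) < 2 * k
  · have : xq K n k i = v K n k (some (.inl ⟨i.1, h⟩)) := rfl
    rw [this]
    exact Submodule.subset_span (Set.mem_range_self _)
  · have hi : i = ⟨2 * k, Nat.lt_succ_self _⟩ := Fin.ext (show (i : ℕ) = 2 * k by have := i.2; omega)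
    rw [hi, ← pow_one (xq K n k ⟨2 * k, Nat.lt_succ_self _⟩)]
    exact s_mem_span hk hd 1 le_rfl

lemma castLE_ne (i : Fin (2 * k)) :
    ((Fin.castLE (Nat.le_succ (2 * k)) i : Fin (2 * k + 1)) : ℕ) ≠ 2 * k := by
  have := i.2
  simp only [Fin.coe_castLE]
  omega

lemma v_mul_v (hk : 1 ≤ k) (hd : 2 ≤ n - 2 * k) (t t' : ι n k) :
    v K n k t * v K n k t' ∈ Submodule.span K (Set.range (v K n k)) := by
  rcases t with _ | i | j
  · rw [v_none, one_mul]
    exact Submodule.subset_span (Set.mem_range_self _)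
  · rcases t' with _ | i' | j'
    · rw [v_none, mul_one]
      exact Submodule.subset_span (Set.mem_range_self _)
    · rw [v_inl, v_inl]
      rcases prod_cases (K := K) (n := n) hk (Fin.castLE (Nat.le_succ _) i) (Fin.castLE (Nat.le_succ _) i')
        with h | h | h <;> rw [h]
      · exact Submodule.zero_mem _
      · exact s_mem_span hk hd 2 (by omega)
      · exact s_mem_span hk hd (n - 2 * k) (by omega)
    · rw [v_inl, v_inr, xq_mul_spow _ (castLE_ne i)]
      exact Submodule.zero_mem _
  · rcases t' with _ | i' | j'
    · rw [v_none, mul_one]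
      exact Submodule.subset_span (Set.mem_range_self _)
    · rw [v_inr, v_inl, spow_mul_xq _ (castLE_ne i')]
      exact Submodule.zero_mem _
    · rw [v_inr, v_inr, ← pow_add]
      exact s_mem_span hk hd _ (by omega)

lemma v_span (hk : 1 ≤ k) (hd : 2 ≤ n - 2 * k) :
    Submodule.span K (Set.range (v K n k)) = ⊤ := by
  have hone : (1 : MvPolynomial (Fin (2 * k + 1)) K ⧸ I0 K n k) ∈
      Submodule.span K (Set.range (v K n k)) :=
    Submodule.subset_span ⟨none, rfl⟩
  have hmulW : Submodule.span K (Set.range (v K n k)) * Submodule.span K (Set.range (v K n k)) ≤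
      Submodule.span K (Set.range (v K n k)) := by
    rw [Submodule.span_mul_span]
    refine Submodule.span_le.2 ?_
    rintro _ ⟨a, ⟨t, rfl⟩, b, ⟨t', rfl⟩, rfl⟩
    exact v_mul_v hk hd t t'
  have hmul : ∀ x y : MvPolynomial (Fin (2 * k + 1)) K ⧸ I0 K n k,
      x ∈ Submodule.span K (Set.range (v K n k)) →
      y ∈ Submodule.span K (Set.range (v K n k)) →
      x * y ∈ Submodule.span K (Set.range (v K n k)) :=
    fun x y hx hy => hmulW (Submodule.mul_mem_mul hx hy)
  have hadj : Algebra.adjoin K (Set.range (xq K n k)) = ⊤ := by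
    have hr : Set.range (xq K n k) =
        (Ideal.Quotient.mkₐ K (I0 K n k)) '' (Set.range X) := by
      rw [← Set.range_comp]; rfl
    rw [hr, ← AlgHom.map_adjoin, MvPolynomial.adjoin_range_X, Algebra.map_top]
    exact (AlgHom.range_eq_top _).2 (Ideal.Quotient.mkₐ_surjective K _)
  have hle : (⊤ : Subalgebra K (MvPolynomial (Fin (2 * k + 1)) K ⧸ I0 K n k)) ≤
      (Submodule.span K (Set.range (v K n k))).toSubalgebra hone hmul := by
    rw [← hadj]
    exact Algebra.adjoin_le (by rintro a ⟨i, rfl⟩; exact xq_mem_span hk hd i)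
  refine top_unique (fun a _ => ?_)
  exact hle trivial

noncomputable def bas (hk : 1 ≤ k) (hd : 2 ≤ n - 2 * k) :
    Module.Basis (ι n k) K (MvPolynomial (Fin (2 * k + 1)) K ⧸ I0 K n k) :=
  Module.Basis.mk (v_indep hd) (by rw [v_span hk hd])

lemma finrank_A (hk : 1 ≤ k) (hnk : 2 * k + 2 ≤ n) :
    Module.finrank K (MvPolynomial (Fin (2 * k + 1)) K ⧸ I0 K n k) = n + 1 := by
  have hd : 2 ≤ n - 2 * k := by omega
  rw [Module.finrank_eq_card_basis (bas hk hd)]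
  simp only [ι, Fintype.card_option, Fintype.card_sum, Fintype.card_fin]
  omega

variable (K n k) in
noncomputable def M0 : Ideal (MvPolynomial (Fin (2 * k + 1)) K ⧸ I0 K n k) :=
  Ideal.span (Set.range (xq K n k))


lemma I0_le_ker (hd : 2 ≤ n - 2 * k) :
    ∀ a ∈ I0 K n k, (aeval (0 : Fin (2 * k + 1) → K)) a = 0 := by
  intro a ha
  have hle : I0 K n k ≤ RingHom.ker (aeval (0 : Fin (2 * k + 1) → K) :
      MvPolynomial (Fin (2 * k + 1)) K →ₐ[K] K) := by
    refine Ideal.span_le.2 ?_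
    rintro p (⟨i, j, _, _, rfl⟩ | ⟨l, hl, rfl⟩) <;> simp only [SetLike.mem_coe, RingHom.mem_ker]
    · simp
    · simp [zero_pow (show n - 2 * k ≠ 0 by omega)]
  exact hle ha

variable (K n k) in
noncomputable def ε (hd : 2 ≤ n - 2 * k) :
    (MvPolynomial (Fin (2 * k + 1)) K ⧸ I0 K n k) →ₐ[K] K :=
  Ideal.Quotient.liftₐ (I0 K n k) (aeval 0) (I0_le_ker hd)

lemma ε_mk (hd : 2 ≤ n - 2 * k) (p : MvPolynomial (Fin (2 * k + 1)) K) :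
    ε K n k hd (Ideal.Quotient.mk (I0 K n k) p) = aeval (0 : Fin (2 * k + 1) → K) p := by
  rw [ε, Ideal.Quotient.liftₐ_apply]
  rfl

lemma ε_xq (hd : 2 ≤ n - 2 * k) (i : Fin (2 * k + 1)) : ε K n k hd (xq K n k i) = 0 := by
  rw [xq, ε_mk, aeval_X, Pi.zero_apply]

lemma ε_v (hd : 2 ≤ n - 2 * k) (t : ι n k) :
    ε K n k hd (v K n k t) = if t = none then 1 else 0 := by
  rcases t with _ | i | j
  · rw [v_none, map_one, if_pos rfl]
  · rw [v_inl, ε_xq, if_neg (by simp)]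
  · rw [v_inr, map_pow, ε_xq, zero_pow (Nat.succ_ne_zero _), if_neg (by simp)]

lemma ε_zero_iff (hk : 1 ≤ k) (hd : 2 ≤ n - 2 * k)
    (a : MvPolynomial (Fin (2 * k + 1)) K ⧸ I0 K n k) :
    ε K n k hd a = 0 ↔ a ∈ M0 K n k := by
  constructor
  · intro h
    have := v_span (K := K) hk hd
    have ha : a ∈ Submodule.span K (Set.range (v K n k)) := by rw [this]; trivial
    obtain ⟨c, hc⟩ := (Submodule.mem_span_range_iff_exists_fun K).mp ha
    have hεa : ε K n k hd a = c none := by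
      rw [← hc, map_sum]
      simp only [map_smul, ε_v, smul_eq_mul]
      rw [Fintype.sum_option]
      simp
    have hcnone : c none = 0 := by rw [← hεa, h]
    have hmem : ∀ t : ι n k, c t • v K n k t ∈ M0 K n k := by
      rintro (_ | i | j)
      · rw [v_none, hcnone, zero_smul]; exact Submodule.zero_mem _
      · rw [v_inl]
        exact Submodule.smul_mem ((M0 K n k).restrictScalars K) _
          (Ideal.subset_span (Set.mem_range_self _))
      · rw [v_inr]
        refine Submodule.smul_mem ((M0 K n k).restrictScalars K) _ ?_
        show xq K n k ⟨2 * k, Nat.lt_succ_self _⟩ ^ (j.1 + 1) ∈ M0 K n k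
        rw [pow_succ]
        exact Ideal.mul_mem_left _ _ (Ideal.subset_span (Set.mem_range_self _))
    rw [← hc]
    exact Submodule.sum_mem _ (fun t _ => hmem t)
  · intro h
    have hker : M0 K n k ≤ RingHom.ker (ε K n k hd) := by
      refine Ideal.span_le.2 ?_
      rintro b ⟨i, rfl⟩
      exact ε_xq hd i
    exact hker h

lemma M0_maximal (hk : 1 ≤ k) (hd : 2 ≤ n - 2 * k) : (M0 K n k).IsMaximal := by
  have hker : RingHom.ker ((ε K n k hd) : (MvPolynomial (Fin (2 * k + 1)) K ⧸ I0 K n k) →+* K)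
      = M0 K n k := by
    ext a
    exact ε_zero_iff hk hd a
  rw [← hker]
  exact RingHom.ker_isMaximal_of_surjective _
    (fun c => ⟨algebraMap K _ c, by simpa using (ε K n k hd).commutes c⟩)

lemma M0_sq_le (hk : 1 ≤ k) (hd : 2 ≤ n - 2 * k) :
    M0 K n k * M0 K n k ≤ Ideal.span {xq K n k ⟨2 * k, Nat.lt_succ_self _⟩ ^ 2} := by
  rw [M0, Ideal.span_mul_span']
  refine Ideal.span_le.2 ?_
  rintro _ ⟨a, ⟨i, rfl⟩, b, ⟨i', rfl⟩, rfl⟩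
  show xq K n k i * xq K n k i' ∈ Ideal.span {xq K n k ⟨2 * k, Nat.lt_succ_self _⟩ ^ 2}
  rcases prod_cases (K := K) (n := n) hk i i' with h | h | h <;> rw [h]
  · exact Ideal.zero_mem _
  · exact Ideal.subset_span rfl
  · exact Ideal.mem_span_singleton'.2 ⟨xq K n k ⟨2 * k, Nat.lt_succ_self _⟩ ^ (n - 2 * k - 2),
      by rw [← pow_add]; congr 1; omega⟩

lemma M0_pow_le (hk : 1 ≤ k) (hd : 2 ≤ n - 2 * k) (j : ℕ) :
    M0 K n k ^ (j + 2) ≤ Ideal.span {xq K n k ⟨2 * k, Nat.lt_succ_self _⟩ ^ (j + 2)} := by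
  induction j with
  | zero =>
    rw [show (0 + 2 : ℕ) = 2 from rfl, pow_two (M0 K n k)]
    exact M0_sq_le (K := K) (n := n) hk hd
  | succ j ih =>
    have h1 : M0 K n k ^ (j + 3) = M0 K n k ^ (j + 2) * M0 K n k := by exact pow_succ (M0 K n k) (j + 2)
    rw [h1]
    refine le_trans (Ideal.mul_mono_left ih) ?_
    rw [M0, Ideal.span_mul_span']
    refine Ideal.span_le.2 ?_
    rintro _ ⟨a, ha, b, ⟨i, rfl⟩, rfl⟩
    rcases Set.mem_singleton_iff.1 ha with rfl
    show xq K n k ⟨2 * k, Nat.lt_succ_self _⟩ ^ (j + 2) * xq K n k i ∈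
      Ideal.span {xq K n k ⟨2 * k, Nat.lt_succ_self _⟩ ^ (j + 1 + 2)}
    rcases i with ⟨iv, hlt⟩
    by_cases hiv : iv = 2 * k
    · subst hiv
      have : xq K n k ⟨2 * k, Nat.lt_succ_self _⟩ ^ (j + 2) * xq K n k ⟨2 * k, hlt⟩ =
          xq K n k ⟨2 * k, Nat.lt_succ_self _⟩ ^ (j + 3) := by
        rw [← pow_succ]
      rw [this]
      exact Ideal.subset_span rfl
    · rw [show (j + 2) = (j + 1) + 1 by ring, spow_mul_xq ⟨iv, hlt⟩ hiv]
      exact Ideal.zero_mem _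

lemma M0_pow_zero (hk : 1 ≤ k) (hd : 2 ≤ n - 2 * k) :
    M0 K n k ^ (n - 2 * k + 1) = ⊥ := by
  refine le_bot_iff.1 ?_
  have he : n - 2 * k + 1 = (n - 2 * k - 1) + 2 := by omega
  rw [he]
  refine le_trans (M0_pow_le hk hd _) ?_
  rw [show (n - 2 * k - 1) + 2 = n - 2 * k + 1 by omega,
    Ideal.span_singleton_eq_bot.2 (s_pow_succ hk hd)]

lemma M0_pow_d (hk : 1 ≤ k) (hd : 2 ≤ n - 2 * k) :
    M0 K n k ^ (n - 2 * k) = Ideal.span {xq K n k ⟨2 * k, Nat.lt_succ_self _⟩ ^ (n - 2 * k)} := by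
  refine le_antisymm ?_ ?_
  · have he : n - 2 * k = (n - 2 * k - 2) + 2 := by omega
    rw [he]
    exact M0_pow_le hk hd _
  · refine Ideal.span_le.2 ?_
    rintro _ rfl
    exact Ideal.pow_mem_pow (Ideal.subset_span (Set.mem_range_self _)) _

lemma isUnit_of_eps (hk : 1 ≤ k) (hd : 2 ≤ n - 2 * k)
    {a : MvPolynomial (Fin (2 * k + 1)) K ⧸ I0 K n k} (ha : ε K n k hd a ≠ 0) : IsUnit a := by
  have hmem : a - algebraMap K _ (ε K n k hd a) ∈ M0 K n k := by
    rw [← ε_zero_iff hk hd]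
    simp [map_sub]
  have hnil : IsNilpotent (a - algebraMap K _ (ε K n k hd a)) := by
    refine ⟨n - 2 * k + 1, ?_⟩
    have h1 := Ideal.pow_mem_pow hmem (n - 2 * k + 1)
    rw [M0_pow_zero hk hd] at h1
    simpa using h1
  have hsplit : a = algebraMap K _ (ε K n k hd a) + (a - algebraMap K _ (ε K n k hd a)) := by
    ring
  rw [hsplit]
  exact IsNilpotent.isUnit_add_left_of_commute hnil
    ((algebraMap K _).isUnit_map (isUnit_iff_ne_zero.2 ha)) (Commute.all _ _)

lemma A_nontrivial (hd : 2 ≤ n - 2 * k) :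
    Nontrivial (MvPolynomial (Fin (2 * k + 1)) K ⧸ I0 K n k) :=
  nontrivial_of_ne 1 0 (fun h => one_ne_zero (α := K)
    (by rw [← map_one (ε K n k hd), h, map_zero]))

lemma A_local (hk : 1 ≤ k) (hd : 2 ≤ n - 2 * k) :
    IsLocalRing (MvPolynomial (Fin (2 * k + 1)) K ⧸ I0 K n k) := by
  have := A_nontrivial (K := K) hd
  refine IsLocalRing.of_isUnit_or_isUnit_one_sub_self (fun a => ?_)
  by_cases h : ε K n k hd a = 0
  · right
    refine isUnit_of_eps hk hd ?_
    rw [map_sub, map_one, h, sub_zero]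
    exact one_ne_zero
  · exact Or.inl (isUnit_of_eps hk hd h)

lemma mul_sd_mem (hk : 1 ≤ k) (hd : 2 ≤ n - 2 * k)
    (b : MvPolynomial (Fin (2 * k + 1)) K ⧸ I0 K n k) :
    b * xq K n k ⟨2 * k, Nat.lt_succ_self _⟩ ^ (n - 2 * k) ∈
      Submodule.span K {xq K n k ⟨2 * k, Nat.lt_succ_self _⟩ ^ (n - 2 * k)} := by
  have hb : b ∈ Submodule.span K (Set.range (v K n k)) := by rw [v_span hk hd]; trivial
  have hle : Submodule.span K (Set.range (v K n k)) ≤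
      (Submodule.span K {xq K n k ⟨2 * k, Nat.lt_succ_self _⟩ ^ (n - 2 * k)}).comap
        (LinearMap.mulRight K (xq K n k ⟨2 * k, Nat.lt_succ_self _⟩ ^ (n - 2 * k))) := by
    refine Submodule.span_le.2 ?_
    rintro _ ⟨t, rfl⟩
    simp only [Set.mem_setOf_eq, SetLike.mem_coe, Submodule.mem_comap, LinearMap.mulRight_apply]
    rcases t with _ | i | j
    · rw [v_none, one_mul]
      exact Submodule.mem_span_singleton_self _
    · rw [v_inl, show n - 2 * k = (n - 2 * k - 1) + 1 by omega, xq_mul_spow _ (castLE_ne i)]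
      exact Submodule.zero_mem _
    · rw [v_inr, ← pow_add, s_pow_ge hk hd (j.1 + 1 + (n - 2 * k)) (by omega)]
      exact Submodule.zero_mem _
  simpa using hle hb

lemma M0_pow_restrict (hk : 1 ≤ k) (hd : 2 ≤ n - 2 * k) :
    (M0 K n k ^ (n - 2 * k)).restrictScalars K =
      Submodule.span K {xq K n k ⟨2 * k, Nat.lt_succ_self _⟩ ^ (n - 2 * k)} := by
  refine le_antisymm ?_ ?_
  · intro a ha
    have ha' : a ∈ Ideal.span {xq K n k ⟨2 * k, Nat.lt_succ_self _⟩ ^ (n - 2 * k)} := by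
      rw [← M0_pow_d hk hd]
      exact ha
    obtain ⟨b, hb⟩ := Ideal.mem_span_singleton'.1 ha'
    rw [← hb]
    exact mul_sd_mem hk hd b
  · refine Submodule.span_le.2 ?_
    rintro _ rfl
    exact Ideal.pow_mem_pow (Ideal.subset_span (Set.mem_range_self _)) _

lemma sd_mem_colon (hk : 1 ≤ k) (hd : 2 ≤ n - 2 * k) :
    xq K n k ⟨2 * k, Nat.lt_succ_self _⟩ ^ (n - 2 * k) ∈
      (⊥ : Ideal (MvPolynomial (Fin (2 * k + 1)) K ⧸ I0 K n k)).colon (M0 K n k) := by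
  refine Submodule.mem_colon.2 (fun p hp => ?_)
  refine Submodule.span_induction ?_ ?_ ?_ ?_ hp
  · rintro x ⟨i, rfl⟩
    rcases i with ⟨iv, hlt⟩
    rw [Submodule.mem_bot, smul_eq_mul]
    by_cases hiv : iv = 2 * k
    · subst hiv
      have h1 : xq K n k ⟨2 * k, Nat.lt_succ_self _⟩ ^ (n - 2 * k) * xq K n k ⟨2 * k, hlt⟩ =
          xq K n k ⟨2 * k, Nat.lt_succ_self _⟩ ^ (n - 2 * k + 1) := (pow_succ _ _).symm
      rw [h1, s_pow_succ hk hd]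
    · rw [show n - 2 * k = (n - 2 * k - 1) + 1 by omega, spow_mul_xq ⟨iv, hlt⟩ hiv]
  · rw [smul_zero]; exact Submodule.zero_mem _
  · intro x y _ _ hx hy
    rw [smul_add]; exact Submodule.add_mem _ hx hy
  · intro r x _ hx
    rw [Submodule.mem_bot] at hx ⊢
    rw [smul_eq_mul] at hx
    rw [smul_eq_mul, smul_eq_mul, mul_left_comm, hx, mul_zero]

lemma socle_ge (hk : 1 ≤ k) (hd : 2 ≤ n - 2 * k) :
    Submodule.span K {xq K n k ⟨2 * k, Nat.lt_succ_self _⟩ ^ (n - 2 * k)} ≤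
      ((⊥ : Ideal (MvPolynomial (Fin (2 * k + 1)) K ⧸ I0 K n k)).colon
        (M0 K n k)).restrictScalars K :=
  Submodule.span_le.2 (Set.singleton_subset_iff.2 (sd_mem_colon hk hd))

lemma sd_ne (hd : 2 ≤ n - 2 * k) :
    xq K n k ⟨2 * k, Nat.lt_succ_self _⟩ ^ (n - 2 * k) ≠ 0 := by
  have hv : xq K n k ⟨2 * k, Nat.lt_succ_self _⟩ ^ (n - 2 * k) =
      v K n k (some (.inr ⟨n - 2 * k - 1, by omega⟩)) := by
    rw [v_inr]
    congr 1
    show n - 2 * k = n - 2 * k - 1 + 1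
    omega
  rw [hv]
  exact (v_indep hd).ne_zero _

lemma xq_rel1_vals (a b : Fin (2 * k + 1)) (l : ℕ) (hl : l < k)
    (ha : (a : ℕ) = 2 * l) (hb : (b : ℕ) = 2 * l + 1) :
    xq K n k a * xq K n k b = xq K n k ⟨2 * k, Nat.lt_succ_self _⟩ ^ (n - 2 * k) := by
  rcases a with ⟨av, hav⟩
  rcases b with ⟨bv, hbv⟩
  have ha' : av = 2 * l := ha
  have hb' : bv = 2 * l + 1 := hb
  subst ha'
  subst hb'
  exact xq_mul_rel1 l hl

lemma xq_rel0_vals (a b : Fin (2 * k + 1))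
    (h1 : ∀ l, l < k → ¬((a : ℕ) = 2 * l ∧ (b : ℕ) = 2 * l + 1) ∧
      ¬((b : ℕ) = 2 * l ∧ (a : ℕ) = 2 * l + 1))
    (h2 : ¬((a : ℕ) = 2 * k ∧ (b : ℕ) = 2 * k)) :
    xq K n k a * xq K n k b = 0 := by
  rcases le_total a b with h | h
  · refine xq_mul_rel0 a b h ?_
    rintro (⟨l, hl, hx, hy⟩ | ⟨hx, hy⟩)
    · exact (h1 l hl).1 ⟨hx, hy⟩
    · exact h2 ⟨hx, hy⟩
  · rw [mul_comm (xq K n k a) (xq K n k b)]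
    refine xq_mul_rel0 b a h ?_
    rintro (⟨l, hl, hx, hy⟩ | ⟨hx, hy⟩)
    · exact (h1 l hl).2 ⟨hx, hy⟩
    · exact h2 ⟨hy, hx⟩

lemma pair_prod (hk : 1 ≤ k) (hd : 2 ≤ n - 2 * k) (i i' : Fin (2 * k)) (p : Fin (2 * k + 1))
    (hcase : (i.1 % 2 = 0 ∧ (p : ℕ) = i.1 + 1) ∨ (i.1 % 2 = 1 ∧ (p : ℕ) = i.1 - 1)) :
    xq K n k (Fin.castLE (Nat.le_succ _) i') * xq K n k p =
      if i' = i then xq K n k ⟨2 * k, Nat.lt_succ_self _⟩ ^ (n - 2 * k) else 0 := by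
  have hi2 := i.2
  have hi'2 := i'.2
  have hcast : ((Fin.castLE (Nat.le_succ (2 * k)) i' : Fin (2 * k + 1)) : ℕ) = i'.1 :=
    Fin.coe_castLE _ _
  by_cases h : i' = i
  · subst h
    rw [if_pos rfl]
    rcases hcase with ⟨hev, hp⟩ | ⟨hodd, hp⟩
    · exact xq_rel1_vals _ _ (i'.1 / 2) (by omega) (by omega) (by omega)
    · rw [mul_comm (xq K n k (Fin.castLE (Nat.le_succ _) i')) (xq K n k p)]
      exact xq_rel1_vals _ _ ((i'.1 - 1) / 2) (by omega) (by omega) (by omega)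
  · rw [if_neg h]
    have hne : i'.1 ≠ i.1 := fun hh => h (Fin.ext hh)
    refine xq_rel0_vals _ _ (fun l hl => ⟨?_, ?_⟩) ?_
    · rintro ⟨hx, hy⟩
      rcases hcase with ⟨hev, hp⟩ | ⟨hodd, hp⟩ <;> omega
    · rintro ⟨hx, hy⟩
      rcases hcase with ⟨hev, hp⟩ | ⟨hodd, hp⟩ <;> omega
    · rintro ⟨hx, hy⟩
      omega

lemma socle_le (hk : 1 ≤ k) (hd : 2 ≤ n - 2 * k) :
    ((⊥ : Ideal (MvPolynomial (Fin (2 * k + 1)) K ⧸ I0 K n k)).colon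
        (M0 K n k)).restrictScalars K ≤
      Submodule.span K {xq K n k ⟨2 * k, Nat.lt_succ_self _⟩ ^ (n - 2 * k)} := by
  intro a ha
  have hmul0 : ∀ i : Fin (2 * k + 1), a * xq K n k i = 0 := by
    intro i
    have h1 := Submodule.mem_colon.1 ha (xq K n k i)
      (Ideal.subset_span (Set.mem_range_self _))
    rwa [smul_eq_mul, Submodule.mem_bot] at h1
  have hx0ne : xq K n k (Fin.castLE (Nat.le_succ _) (⟨0, by omega⟩ : Fin (2 * k))) ≠ 0 := by
    have h := (v_indep (K := K) (n := n) (k := k) hd).ne_zero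
      (some (Sum.inl (⟨0, by omega⟩ : Fin (2 * k))))
    rwa [v_inl] at h
  have heps : ε K n k hd a = 0 := by
    by_contra hne
    have hu := isUnit_of_eps hk hd hne
    have h0 := hmul0 (Fin.castLE (Nat.le_succ _) ⟨0, by omega⟩)
    exact hx0ne (hu.mul_left_cancel (by rw [h0, mul_zero]))
  have haT : a ∈ Submodule.span K (Set.range (v K n k)) := by rw [v_span hk hd]; trivial
  obtain ⟨c, hc⟩ := (Submodule.mem_span_range_iff_exists_fun K).mp haT
  have hεa : ε K n k hd a = c none := by
    rw [← hc, map_sum]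
    simp only [map_smul, ε_v, smul_eq_mul]
    rw [Fintype.sum_option]
    simp
  have hcnone : c none = 0 := by rw [← hεa, heps]
  have hsd_ne := sd_ne (K := K) (n := n) (k := k) hd
  have hcl : ∀ i : Fin (2 * k), c (some (.inl i)) = 0 := by
    intro i
    have hi2 := i.2
    obtain ⟨pv, hpv, hpne, hcase⟩ : ∃ pv, pv < 2 * k + 1 ∧ pv ≠ 2 * k ∧
        ((i.1 % 2 = 0 ∧ pv = i.1 + 1) ∨ (i.1 % 2 = 1 ∧ pv = i.1 - 1)) := by
      by_cases hpar : i.1 % 2 = 0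
      · exact ⟨i.1 + 1, by omega, by omega, Or.inl ⟨hpar, rfl⟩⟩
      · exact ⟨i.1 - 1, by omega, by omega, Or.inr ⟨by omega, rfl⟩⟩
    have hp := hmul0 ⟨pv, hpv⟩
    rw [← hc, Finset.sum_mul, Fintype.sum_option, Fintype.sum_sum_type] at hp
    have e1 : (c none • v K n k none) * xq K n k ⟨pv, hpv⟩ = 0 := by
      rw [hcnone, zero_smul, zero_mul]
    have e3 : ∀ j : Fin (n - 2 * k),
        (c (some (.inr j)) • v K n k (some (.inr j))) * xq K n k ⟨pv, hpv⟩ = 0 := by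
      intro j
      rw [v_inr, smul_mul_assoc, spow_mul_xq ⟨pv, hpv⟩ hpne, smul_zero]
    have e2 : ∀ i' : Fin (2 * k),
        (c (some (.inl i')) • v K n k (some (.inl i'))) * xq K n k ⟨pv, hpv⟩ =
          if i' = i then c (some (.inl i')) •
            xq K n k ⟨2 * k, Nat.lt_succ_self _⟩ ^ (n - 2 * k) else 0 := by
      intro i'
      rw [v_inl, smul_mul_assoc, pair_prod hk hd i i' ⟨pv, hpv⟩ hcase]
      split_ifs
      · rfl
      · rw [smul_zero]
    rw [e1, zero_add] at hp
    rw [Finset.sum_congr rfl (fun i' _ => e2 i'),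
      Finset.sum_eq_zero (fun j _ => e3 j), add_zero,
      Finset.sum_ite_eq' Finset.univ i
        (fun i' => c (some (.inl i')) • xq K n k ⟨2 * k, Nat.lt_succ_self _⟩ ^ (n - 2 * k)),
      if_pos (Finset.mem_univ i)] at hp
    rcases smul_eq_zero.1 hp with h0 | h0
    · exact h0
    · exact absurd h0 hsd_ne
  have ha_sum : a = ∑ j : Fin (n - 2 * k),
      c (some (.inr j)) • xq K n k ⟨2 * k, Nat.lt_succ_self _⟩ ^ (j.1 + 1) := by
    rw [← hc, Fintype.sum_option, Fintype.sum_sum_type, hcnone, zero_smul, zero_add,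
      Finset.sum_eq_zero (fun i _ => by rw [hcl i, zero_smul]), zero_add]
    exact Finset.sum_congr rfl (fun j _ => by rw [v_inr])
  have hs_mul : ∀ e', 1 ≤ e' → a * xq K n k ⟨2 * k, Nat.lt_succ_self _⟩ ^ e' = 0 := by
    intro e' he'
    have h2k := hmul0 ⟨2 * k, Nat.lt_succ_self _⟩
    rw [show e' = 1 + (e' - 1) by omega, pow_add, pow_one, ← mul_assoc, h2k, zero_mul]
  have hcr : ∀ m : ℕ, ∀ j : Fin (n - 2 * k), j.1 = m → j.1 < n - 2 * k - 1 →
      c (some (.inr j)) = 0 := by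
    intro m
    induction m using Nat.strong_induction_on with
    | _ m IH =>
      intro j hjm hjlt
      have hq := hs_mul (n - 2 * k - 1 - m) (by omega)
      rw [ha_sum, Finset.sum_mul] at hq
      have hterm : ∀ j' : Fin (n - 2 * k), j' ∈ Finset.univ → j' ≠ j →
          (c (some (.inr j')) • xq K n k ⟨2 * k, Nat.lt_succ_self _⟩ ^ (j'.1 + 1)) *
            xq K n k ⟨2 * k, Nat.lt_succ_self _⟩ ^ (n - 2 * k - 1 - m) = 0 := by
        intro j' _ hj'
        rcases Nat.lt_trichotomy j'.1 m with hlt | heq | hgt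
        · rw [IH j'.1 (by omega) j' rfl (by omega), zero_smul, zero_mul]
        · exact absurd (Fin.ext (heq.trans hjm.symm)) hj'
        · rw [smul_mul_assoc, ← pow_add,
            s_pow_ge hk hd (j'.1 + 1 + (n - 2 * k - 1 - m)) (by omega), smul_zero]
      rw [Finset.sum_eq_single j hterm (fun habs => absurd (Finset.mem_univ j) habs),
        smul_mul_assoc, ← pow_add, show j.1 + 1 + (n - 2 * k - 1 - m) = n - 2 * k by omega]
        at hq
      rcases smul_eq_zero.1 hq with h0 | h0
      · exact h0
      · exact absurd h0 hsd_ne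
  have hfin : a = c (some (.inr ⟨n - 2 * k - 1, by omega⟩)) •
      xq K n k ⟨2 * k, Nat.lt_succ_self _⟩ ^ (n - 2 * k) := by
    rw [ha_sum,
      Finset.sum_eq_single (⟨n - 2 * k - 1, by omega⟩ : Fin (n - 2 * k))
        (fun b _ hb => by
          rw [hcr b.1 b rfl (by have := b.2; exact (by
            have : b.1 ≠ n - 2 * k - 1 := fun hh => hb (Fin.ext hh)
            omega)), zero_smul])
        (fun habs => absurd (Finset.mem_univ _) habs)]
    congr 1
    show _ ^ (n - 2 * k - 1 + 1) = _ ^ (n - 2 * k)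
    rw [show n - 2 * k - 1 + 1 = n - 2 * k by omega]
  rw [hfin]
  exact Submodule.smul_mem _ _ (Submodule.mem_span_singleton_self _)

lemma socle_eq (hk : 1 ≤ k) (hd : 2 ≤ n - 2 * k) :
    ((⊥ : Ideal (MvPolynomial (Fin (2 * k + 1)) K ⧸ I0 K n k)).colon
        (M0 K n k)).restrictScalars K =
      Submodule.span K {xq K n k ⟨2 * k, Nat.lt_succ_self _⟩ ^ (n - 2 * k)} :=
  le_antisymm (socle_le hk hd) (socle_ge hk hd)

end Stmt10Aux

/-- With `A_{n,k}` as in Statement 9 (`k ≥ 1`, `n - 2k ≥ 2`), letting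
`m = ⟨S_1,...,S_{2k+1}⟩`, the socle `Soc A = {a : a·m = 0}` equals the one-dimensional span
of `S_{2k+1}^{n-2k}`, and `m^{n-2k} = ⟨S_{2k+1}^{n-2k}⟩`; hence `A_{n,k}` is a Gorenstein
local algebra of dimension `n+1` whose socle equals `m^{n-2k}`. -/
theorem stmt10 (K : Type*) [Field K] [CharZero K] (n k : ℕ) (hk : 1 ≤ k)
    (hnk : 2 * k + 2 ≤ n) :
    let I : Ideal (MvPolynomial (Fin (2 * k + 1)) K) :=
      Ideal.span
        ({p | ∃ i j : Fin (2 * k + 1), i ≤ j ∧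
            ¬((∃ l, l < k ∧ (i : ℕ) = 2 * l ∧ (j : ℕ) = 2 * l + 1) ∨
              ((i : ℕ) = 2 * k ∧ (j : ℕ) = 2 * k)) ∧
            p = X i * X j} ∪
          {p | ∃ l, ∃ _ : l < k,
            p = X (⟨2 * l, by omega⟩ : Fin (2 * k + 1)) *
                  X (⟨2 * l + 1, by omega⟩ : Fin (2 * k + 1)) -
                X (⟨2 * k, by omega⟩ : Fin (2 * k + 1)) ^ (n - 2 * k)});
    let A := MvPolynomial (Fin (2 * k + 1)) K ⧸ I;
    let M : Ideal A := Ideal.span (Set.range fun i : Fin (2 * k + 1) =>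
      Ideal.Quotient.mk I (X i));
    let s : A := Ideal.Quotient.mk I (X (⟨2 * k, by omega⟩ : Fin (2 * k + 1)));
    IsLocalRing A ∧ M.IsMaximal ∧ Module.finrank K A = n + 1 ∧
      ((⊥ : Ideal A).colon M).restrictScalars K = Submodule.span K {s ^ (n - 2 * k)} ∧
      (M ^ (n - 2 * k)).restrictScalars K = Submodule.span K {s ^ (n - 2 * k)} ∧
      Module.finrank K (((⊥ : Ideal A).colon M).restrictScalars K) = 1 := by
  intro I A M s
  have hd : 2 ≤ n - 2 * k := by omega
  refine ⟨Stmt10Aux.A_local hk hd, Stmt10Aux.M0_maximal hk hd, Stmt10Aux.finrank_A hk hnk,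
    Stmt10Aux.socle_eq hk hd, Stmt10Aux.M0_pow_restrict hk hd, ?_⟩
  rw [show (((⊥ : Ideal A).colon M).restrictScalars K) =
      Submodule.span K {s ^ (n - 2 * k)} from Stmt10Aux.socle_eq hk hd]
  exact finrank_span_singleton (Stmt10Aux.sd_ne hd)
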